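/- Let (v,u,S) be a C² solution of the non-isentropic compressible Euler equations in Lagrangian coordinates on (0,T)×ℝ. Set k₁ = ((γ+1)K_c/(2(γ−1))) a^{2/(γ−1)} and k₂ = ((γ−1)/(γ(γ+1))) a Ŝ_x. Then at every point of (0,T)×ℝ the Riccati-type equations ∂₊ξ = k₁( k₂(3ξ + ζ) + ξζ − ξ² ) and ∂₋ζ = k₁( −k₂(ξ + 3ζ) + ξζ − ζ² ) hold. -/

import Mathlib

/- STATEMENT 1: For a C² solution of the non-isentropic compressible Euler equations
on (0,T)×ℝ, with k₁ = ((γ+1)K_c/(2(γ−1))) a^{2/(γ−1)} and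
k₂ = ((γ−1)/(γ(γ+1))) a Ŝ_x, the Riccati equations
∂₊ξ = k₁(k₂(3ξ+ζ) + ξζ − ξ²) and ∂₋ζ = k₁(−k₂(ξ+3ζ) + ξζ − ζ²) hold. -/

noncomputable section
open Real Set

def pt (f : ℝ → ℝ → ℝ) (t x : ℝ) : ℝ := deriv (fun τ => f τ x) t

def px (f : ℝ → ℝ → ℝ) (t x : ℝ) : ℝ := deriv (fun y => f t y) x

def IsC2On (f : ℝ → ℝ → ℝ) (D : Set (ℝ × ℝ)) : Prop :=
  ContDiffOn ℝ 2 (fun q : ℝ × ℝ => f q.1 q.2) D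

def hatSF (c_v : ℝ) (S : ℝ → ℝ → ℝ) (t x : ℝ) : ℝ := Real.exp (S t x / (2 * c_v))

def aE (K γ : ℝ) (v : ℝ → ℝ → ℝ) (t x : ℝ) : ℝ :=
  2 * Real.sqrt (K * γ) / (γ - 1) * v t x ^ (-(γ - 1) / 2)

def cE (K c_v γ : ℝ) (v S : ℝ → ℝ → ℝ) (t x : ℝ) : ℝ :=
  Real.sqrt (K * γ) * v t x ^ (-(γ + 1) / 2) * hatSF c_v S t x

def pE (K c_v γ : ℝ) (v S : ℝ → ℝ → ℝ) (t x : ℝ) : ℝ :=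
  K * Real.exp (S t x / c_v) * v t x ^ (-γ)

def sE (K c_v γ : ℝ) (v u S : ℝ → ℝ → ℝ) (t x : ℝ) : ℝ :=
  u t x + hatSF c_v S t x * aE K γ v t x

def rE (K c_v γ : ℝ) (v u S : ℝ → ℝ → ℝ) (t x : ℝ) : ℝ :=
  u t x - hatSF c_v S t x * aE K γ v t x

def xiE (K c_v γ : ℝ) (v u S : ℝ → ℝ → ℝ) (t x : ℝ) : ℝ :=
  px (sE K c_v γ v u S) t x - (1 / γ) * px (hatSF c_v S) t x * aE K γ v t x

def zetaE (K c_v γ : ℝ) (v u S : ℝ → ℝ → ℝ) (t x : ℝ) : ℝ :=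
  px (rE K c_v γ v u S) t x + (1 / γ) * px (hatSF c_v S) t x * aE K γ v t x

def EulerSys (K c_v γ : ℝ) (v u S : ℝ → ℝ → ℝ) (D : Set (ℝ × ℝ)) : Prop :=
  ∀ t x, (t, x) ∈ D →
    0 < v t x ∧
    pt v t x - px u t x = 0 ∧
    pt u t x + px (pE K c_v γ v S) t x = 0 ∧
    pt S t x = 0

/-- `K_v = (2√(Kγ)/(γ−1))^{2/(γ−1)}`. -/
def KvC (K γ : ℝ) : ℝ := (2 * Real.sqrt (K * γ) / (γ - 1)) ^ (2 / (γ - 1))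

/-- `K_c = √(Kγ) K_v^{−(γ+1)/2}`. -/
def KcC (K γ : ℝ) : ℝ := Real.sqrt (K * γ) * KvC K γ ^ (-(γ + 1) / 2)

/-- `k₁ = ((γ+1)K_c/(2(γ−1))) a^{2/(γ−1)}`. -/
def k1E (K c_v γ : ℝ) (v : ℝ → ℝ → ℝ) (t x : ℝ) : ℝ :=
  (γ + 1) * KcC K γ / (2 * (γ - 1)) * aE K γ v t x ^ (2 / (γ - 1))

/-- `k₂ = ((γ−1)/(γ(γ+1))) a Ŝ_x`. -/
def k2E (K c_v γ : ℝ) (v S : ℝ → ℝ → ℝ) (t x : ℝ) : ℝ :=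
  (γ - 1) / (γ * (γ + 1)) * aE K γ v t x * px (hatSF c_v S) t x


/-! ### Auxiliary two-variable calculus lemmas -/

lemma px_eq (f : ℝ → ℝ → ℝ) (t x : ℝ) : px f t x = deriv (fun y => f t y) x := rfl

lemma pt_eq (f : ℝ → ℝ → ℝ) (t x : ℝ) : pt f t x = deriv (fun τ => f τ x) t := rfl

lemma slice_x {F : ℝ × ℝ → ℝ} {L : ℝ × ℝ →L[ℝ] ℝ} {t x : ℝ}
    (h : HasFDerivAt F L (t, x)) : HasDerivAt (fun y => F (t, y)) (L (0, 1)) x :=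
  h.comp_hasDerivAt x ((hasDerivAt_const x t).prodMk (hasDerivAt_id x))

lemma slice_t {F : ℝ × ℝ → ℝ} {L : ℝ × ℝ →L[ℝ] ℝ} {t x : ℝ}
    (h : HasFDerivAt F L (t, x)) : HasDerivAt (fun τ => F (τ, x)) (L (1, 0)) t :=
  h.comp_hasDerivAt t ((hasDerivAt_id t).prodMk (hasDerivAt_const t x))

lemma c2_package {T : ℝ} {f : ℝ → ℝ → ℝ} (hf : IsC2On f (Ioo 0 T ×ˢ univ))
    {t : ℝ} (ht : t ∈ Ioo 0 T) :
    (∀ x, HasDerivAt (fun y => f t y) (px f t x) x) ∧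
    (∀ x, HasDerivAt (fun τ => f τ x) (pt f t x) t) ∧
    (∀ x, HasDerivAt (fun y => px f t y) (px (px f) t x) x) ∧
    (∀ x, HasDerivAt (fun y => pt f t y) (px (pt f) t x) x) ∧
    (∀ x, HasDerivAt (fun τ => px f τ x) (px (pt f) t x) t) := by
  have hD : IsOpen (Ioo (0:ℝ) T ×ˢ (univ : Set ℝ)) := isOpen_Ioo.prod isOpen_univ
  set F : ℝ × ℝ → ℝ := fun q => f q.1 q.2 with hF
  have hCA : ∀ t' ∈ Ioo (0:ℝ) T, ∀ x : ℝ, ContDiffAt ℝ 2 F (t', x) := fun t' ht' x =>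
    hf.contDiffAt (hD.mem_nhds ⟨ht', mem_univ x⟩)
  have hdF : ∀ t' ∈ Ioo (0:ℝ) T, ∀ x : ℝ, HasFDerivAt F (fderiv ℝ F (t', x)) (t', x) :=
    fun t' ht' x => (((hCA t' ht' x).differentiableAt (by norm_num))).hasFDerivAt
  have hpx : ∀ t' ∈ Ioo (0:ℝ) T, ∀ x : ℝ, px f t' x = fderiv ℝ F (t', x) (0, 1) :=
    fun t' ht' x => (slice_x (hdF t' ht' x)).deriv
  have hpt : ∀ t' ∈ Ioo (0:ℝ) T, ∀ x : ℝ, pt f t' x = fderiv ℝ F (t', x) (1, 0) :=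
    fun t' ht' x => (slice_t (hdF t' ht' x)).deriv
  have hC1 : ∀ x : ℝ, ContDiffAt ℝ 1 (fderiv ℝ F) (t, x) := fun x =>
    (hCA t ht x).fderiv_right (le_refl _)
  have happ : ∀ (w : ℝ × ℝ) (x : ℝ),
      HasFDerivAt (fun q : ℝ × ℝ => fderiv ℝ F q w)
        ((fderiv ℝ (fderiv ℝ F) (t, x)).flip w) (t, x) := by
    intro w x
    have h1 : HasFDerivAt (fderiv ℝ F) (fderiv ℝ (fderiv ℝ F) (t, x)) (t, x) :=
      ((hC1 x).differentiableAt (by norm_num)).hasFDerivAt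
    have h2 := h1.clm_apply (hasFDerivAt_const w (t, x))
    simpa using h2
  have hsymm : ∀ x : ℝ, ∀ a b : ℝ × ℝ,
      fderiv ℝ (fderiv ℝ F) (t, x) a b = fderiv ℝ (fderiv ℝ F) (t, x) b a := fun x =>
    (hCA t ht x).isSymmSndFDerivAt (by norm_num)
  refine ⟨fun x => (slice_x (hdF t ht x)).differentiableAt.hasDerivAt,
    fun x => (slice_t (hdF t ht x)).differentiableAt.hasDerivAt, ?_, ?_, ?_⟩
  · intro x
    have h1 : (fun y => px f t y) = fun y => fderiv ℝ F (t, y) (0, 1) := by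
      funext y; exact hpx t ht y
    rw [show px (px f) t x = deriv (fun y => px f t y) x from rfl, h1]
    exact (slice_x (happ (0, 1) x)).differentiableAt.hasDerivAt
  · intro x
    have h1 : (fun y => pt f t y) = fun y => fderiv ℝ F (t, y) (1, 0) := by
      funext y; exact hpt t ht y
    rw [show px (pt f) t x = deriv (fun y => pt f t y) x from rfl, h1]
    exact (slice_x (happ (1, 0) x)).differentiableAt.hasDerivAt
  · intro x
    have h1 : HasDerivAt (fun τ => fderiv ℝ F (τ, x) (0, 1))
        (fderiv ℝ (fderiv ℝ F) (t, x) (1, 0) (0, 1)) t := slice_t (happ (0, 1) x)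
    have h2 : (fun τ => px f τ x) =ᶠ[nhds t] fun τ => fderiv ℝ F (τ, x) (0, 1) := by
      filter_upwards [isOpen_Ioo.mem_nhds ht] with τ hτ
      exact hpx τ hτ x
    have h3 : HasDerivAt (fun τ => px f τ x)
        (fderiv ℝ (fderiv ℝ F) (t, x) (1, 0) (0, 1)) t := h1.congr_of_eventuallyEq h2
    have h4 : px (pt f) t x = fderiv ℝ (fderiv ℝ F) (t, x) (1, 0) (0, 1) := by
      have h5 : (fun y => pt f t y) = fun y => fderiv ℝ F (t, y) (1, 0) := by
        funext y; exact hpt t ht y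
      rw [show px (pt f) t x = deriv (fun y => pt f t y) x from rfl, h5,
        (slice_x (happ (1, 0) x)).deriv]
      exact (hsymm x (0,1) (1,0)).symm ▸ rfl
    rw [h4]; exact h3

/-! ### rpow normalization lemmas -/

lemma rpow_idA {V : ℝ} (hV : 0 < V) (γ : ℝ) :
    V ^ (-(γ - 1) / 2 - 1) = V ^ (-(γ - 1) / 2) * V⁻¹ := by
  rw [show -(γ - 1) / 2 - 1 = -(γ - 1) / 2 + (-1) by ring, Real.rpow_add hV,
    Real.rpow_neg_one]

lemma rpow_idB {V : ℝ} (hV : 0 < V) (γ : ℝ) :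
    V ^ (-(γ + 1) / 2) = V ^ (-(γ - 1) / 2) * V⁻¹ := by
  rw [show -(γ + 1) / 2 = -(γ - 1) / 2 + (-1) by ring, Real.rpow_add hV,
    Real.rpow_neg_one]

lemma rpow_idD {V : ℝ} (hV : 0 < V) (γ : ℝ) :
    V ^ (-γ) = V ^ (-(γ - 1) / 2) * V ^ (-(γ - 1) / 2) * V⁻¹ := by
  rw [show (-γ : ℝ) = -(γ - 1) / 2 + (-(γ - 1) / 2 + (-1)) by ring, Real.rpow_add hV,
    Real.rpow_add hV, Real.rpow_neg_one, mul_assoc]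

lemma rpow_idE {V : ℝ} (hV : 0 < V) (γ : ℝ) :
    V ^ (-γ - 1) = V ^ (-(γ - 1) / 2) * V ^ (-(γ - 1) / 2) * V⁻¹ * V⁻¹ := by
  rw [show (-γ - 1 : ℝ) = -(γ - 1) / 2 + (-(γ - 1) / 2 + (-1 + -1)) by ring,
    Real.rpow_add hV, Real.rpow_add hV, Real.rpow_add hV, Real.rpow_neg_one]
  ring


lemma rpow_idF {V : ℝ} (hV : 0 < V) (γ : ℝ) :
    V ^ (-γ - 1 - 1) = V ^ (-(γ - 1) / 2) * V ^ (-(γ - 1) / 2) * V⁻¹ * V⁻¹ * V⁻¹ := by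
  rw [show (-γ - 1 - 1 : ℝ) = -(γ - 1) / 2 + (-(γ - 1) / 2 + (-1 + (-1 + -1))) by ring,
    Real.rpow_add hV, Real.rpow_add hV, Real.rpow_add hV, Real.rpow_add hV, Real.rpow_neg_one]
  ring

lemma k1_val {K γ V : ℝ} (hK : 0 < K) (hγ : 1 < γ) (hV : 0 < V) :
    (γ + 1) * KcC K γ / (2 * (γ - 1)) *
      (2 * Real.sqrt (K * γ) / (γ - 1) * V ^ (-(γ - 1) / 2)) ^ (2 / (γ - 1))
      = (γ + 1) / (4 * V) := by
  have hγ0 : (0:ℝ) < γ := by linarith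
  have hγ1 : (0:ℝ) < γ - 1 := by linarith
  have hKγ : 0 < K * γ := mul_pos hK hγ0
  have hsq : 0 < Real.sqrt (K * γ) := Real.sqrt_pos.mpr hKγ
  have hA : 0 < 2 * Real.sqrt (K * γ) / (γ - 1) := by positivity
  rw [Real.mul_rpow hA.le (Real.rpow_nonneg hV.le _), ← Real.rpow_mul hV.le,
    show -(γ - 1) / 2 * (2 / (γ - 1)) = -1 by field_simp,
    Real.rpow_neg_one, KcC, KvC, ← Real.rpow_mul hA.le]
  rw [show (γ + 1) * (Real.sqrt (K * γ) * (2 * Real.sqrt (K * γ) / (γ - 1)) ^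
      (2 / (γ - 1) * (-(γ + 1) / 2))) / (2 * (γ - 1)) *
      ((2 * Real.sqrt (K * γ) / (γ - 1)) ^ (2 / (γ - 1)) * V⁻¹)
      = (γ + 1) * Real.sqrt (K * γ) / (2 * (γ - 1)) *
        ((2 * Real.sqrt (K * γ) / (γ - 1)) ^ (2 / (γ - 1) * (-(γ + 1) / 2)) *
         (2 * Real.sqrt (K * γ) / (γ - 1)) ^ (2 / (γ - 1))) * V⁻¹ by ring,
    ← Real.rpow_add hA, show 2 / (γ - 1) * (-(γ + 1) / 2) + 2 / (γ - 1) = -1 by field_simp; ring,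
    Real.rpow_neg_one]
  field_simp
  ring

set_option maxHeartbeats 4000000 in
theorem statement1 (K c_v γ T : ℝ) (hK : 0 < K) (hcv : 0 < c_v) (hγ : 1 < γ)
    (hT : 0 < T) (v u S : ℝ → ℝ → ℝ)
    (hv : IsC2On v (Ioo 0 T ×ˢ univ)) (hu : IsC2On u (Ioo 0 T ×ˢ univ))
    (hS : IsC2On S (Ioo 0 T ×ˢ univ))
    (hsys : EulerSys K c_v γ v u S (Ioo 0 T ×ˢ univ)) :
    ∀ t x, (t, x) ∈ (Ioo 0 T ×ˢ univ : Set (ℝ × ℝ)) →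
      pt (xiE K c_v γ v u S) t x + cE K c_v γ v S t x * px (xiE K c_v γ v u S) t x
        = k1E K c_v γ v t x *
            (k2E K c_v γ v S t x * (3 * xiE K c_v γ v u S t x + zetaE K c_v γ v u S t x)
              + xiE K c_v γ v u S t x * zetaE K c_v γ v u S t x
              - (xiE K c_v γ v u S t x) ^ 2) ∧
      pt (zetaE K c_v γ v u S) t x - cE K c_v γ v S t x * px (zetaE K c_v γ v u S) t x
        = k1E K c_v γ v t x *
            (-(k2E K c_v γ v S t x) * (xiE K c_v γ v u S t x + 3 * zetaE K c_v γ v u S t x)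
              + xiE K c_v γ v u S t x * zetaE K c_v γ v u S t x
              - (zetaE K c_v γ v u S t x) ^ 2) := by
  intro t x hq
  obtain ⟨ht, -⟩ := hq
  have hγ0 : (0:ℝ) < γ := by linarith
  have hγ1 : (0:ℝ) < γ - 1 := by linarith
  have hγ0' : (γ:ℝ) ≠ 0 := ne_of_gt hγ0
  have hγ1' : (γ:ℝ) - 1 ≠ 0 := ne_of_gt hγ1
  have hγp1 : (γ:ℝ) + 1 ≠ 0 := by positivity
  have hcv0 : c_v ≠ 0 := ne_of_gt hcv
  have hKγ : 0 < K * γ := mul_pos hK hγ0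
  have hsq : 0 < Real.sqrt (K * γ) := Real.sqrt_pos.mpr hKγ
  have hvpos : ∀ t' ∈ Ioo (0:ℝ) T, ∀ y : ℝ, 0 < v t' y := fun t' ht' y =>
    (hsys t' y ⟨ht', mem_univ y⟩).1
  have hV : 0 < v t x := hvpos t ht x
  have hne : v t x ≠ 0 := hV.ne'
  obtain ⟨vX, vT, vXX, -, vXT⟩ := c2_package hv ht
  obtain ⟨uX, uT, uXX, -, uXT⟩ := c2_package hu ht
  obtain ⟨sX, sT, sXX, -, sXT⟩ := c2_package hS ht
  -- hatSF slice derivatives in x at any time in the strip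
  have hMx : ∀ t', t' ∈ Ioo (0:ℝ) T → ∀ y : ℝ,
      HasDerivAt (fun y' => hatSF c_v S t' y')
        (Real.exp (S t' y / (2 * c_v)) * (px S t' y / (2 * c_v))) y := fun t' ht' y =>
    (((c2_package hS ht').1 y).div_const (2 * c_v)).exp
  have hMderiv : ∀ t', t' ∈ Ioo (0:ℝ) T → ∀ y : ℝ,
      px (hatSF c_v S) t' y = Real.exp (S t' y / (2 * c_v)) * (px S t' y / (2 * c_v)) :=
    fun t' ht' y => (hMx t' ht' y).deriv
  have haD : ∀ t', t' ∈ Ioo (0:ℝ) T → ∀ y : ℝ,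
      HasDerivAt (fun y' => aE K γ v t' y')
        (2 * Real.sqrt (K * γ) / (γ - 1) *
          (px v t' y * (-(γ - 1) / 2) * v t' y ^ (-(γ - 1) / 2 - 1))) y := fun t' ht' y =>
    (((c2_package hv ht').1 y).rpow_const (Or.inl (hvpos t' ht' y).ne')).const_mul _
  -- canonical pointwise formula for ξ
  have hxi : ∀ t', t' ∈ Ioo (0:ℝ) T → ∀ y : ℝ, xiE K c_v γ v u S t' y
      = px u t' y
        - Real.sqrt (K * γ) * (v t' y ^ (-(γ - 1) / 2) * (v t' y)⁻¹) *
            Real.exp (S t' y / (2 * c_v)) * px v t' y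
        + (γ - 1) / γ * (Real.exp (S t' y / (2 * c_v)) * px S t' y / (2 * c_v)) *
            (2 * Real.sqrt (K * γ) / (γ - 1) * v t' y ^ (-(γ - 1) / 2)) := by
    intro t' ht' y
    have hvy : v t' y ≠ 0 := (hvpos t' ht' y).ne'
    have hsE : px (sE K c_v γ v u S) t' y
        = px u t' y + (Real.exp (S t' y / (2 * c_v)) * (px S t' y / (2 * c_v)) * aE K γ v t' y
          + hatSF c_v S t' y * (2 * Real.sqrt (K * γ) / (γ - 1) *
              (px v t' y * (-(γ - 1) / 2) * v t' y ^ (-(γ - 1) / 2 - 1)))) :=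
      (((c2_package hu ht').1 y).add ((hMx t' ht' y).mul (haD t' ht' y))).deriv
    simp only [xiE]
    rw [hsE, hMderiv t' ht' y]
    simp only [aE, hatSF]
    rw [rpow_idA (hvpos t' ht' y) γ]
    field_simp
    ring
  -- canonical pointwise formula for ζ
  have hze : ∀ t', t' ∈ Ioo (0:ℝ) T → ∀ y : ℝ, zetaE K c_v γ v u S t' y
      = px u t' y
        + Real.sqrt (K * γ) * (v t' y ^ (-(γ - 1) / 2) * (v t' y)⁻¹) *
            Real.exp (S t' y / (2 * c_v)) * px v t' y
        - (γ - 1) / γ * (Real.exp (S t' y / (2 * c_v)) * px S t' y / (2 * c_v)) *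
            (2 * Real.sqrt (K * γ) / (γ - 1) * v t' y ^ (-(γ - 1) / 2)) := by
    intro t' ht' y
    have hvy : v t' y ≠ 0 := (hvpos t' ht' y).ne'
    have hrE : px (rE K c_v γ v u S) t' y
        = px u t' y - (Real.exp (S t' y / (2 * c_v)) * (px S t' y / (2 * c_v)) * aE K γ v t' y
          + hatSF c_v S t' y * (2 * Real.sqrt (K * γ) / (γ - 1) *
              (px v t' y * (-(γ - 1) / 2) * v t' y ^ (-(γ - 1) / 2 - 1)))) :=
      (((c2_package hu ht').1 y).sub ((hMx t' ht' y).mul (haD t' ht' y))).deriv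
    simp only [zetaE]
    rw [hrE, hMderiv t' ht' y]
    simp only [aE, hatSF]
    rw [rpow_idA (hvpos t' ht' y) γ]
    field_simp
    ring
  -- x-direction derivative chains at (t,x)
  have hP : HasDerivAt (fun y => v t y ^ (-(γ - 1) / 2))
      (px v t x * (-(γ - 1) / 2) * v t x ^ (-(γ - 1) / 2 - 1)) x :=
    (vX x).rpow_const (Or.inl hne)
  have hI : HasDerivAt (fun y => (v t y)⁻¹) (-px v t x / v t x ^ 2) x := (vX x).inv hne
  have h2x : HasDerivAt (fun y => Real.sqrt (K * γ) * (v t y ^ (-(γ - 1) / 2) * (v t y)⁻¹) *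
      Real.exp (S t y / (2 * c_v)) * px v t y)
      ((Real.sqrt (K * γ) * (px v t x * (-(γ - 1) / 2) * v t x ^ (-(γ - 1) / 2 - 1) * (v t x)⁻¹
          + v t x ^ (-(γ - 1) / 2) * (-px v t x / v t x ^ 2)) * Real.exp (S t x / (2 * c_v))
        + Real.sqrt (K * γ) * (v t x ^ (-(γ - 1) / 2) * (v t x)⁻¹) *
            (Real.exp (S t x / (2 * c_v)) * (px S t x / (2 * c_v)))) * px v t x
       + Real.sqrt (K * γ) * (v t x ^ (-(γ - 1) / 2) * (v t x)⁻¹) * Real.exp (S t x / (2 * c_v))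
          * px (px v) t x) x :=
    (((hP.mul hI).const_mul (Real.sqrt (K * γ))).mul (hMx t ht x)).mul (vXX x)
  have h3x : HasDerivAt (fun y => (γ - 1) / γ *
      (Real.exp (S t y / (2 * c_v)) * px S t y / (2 * c_v)) *
      (2 * Real.sqrt (K * γ) / (γ - 1) * v t y ^ (-(γ - 1) / 2)))
      ((γ - 1) / γ * ((Real.exp (S t x / (2 * c_v)) * (px S t x / (2 * c_v)) * px S t x
          + Real.exp (S t x / (2 * c_v)) * px (px S) t x) / (2 * c_v)) *
        (2 * Real.sqrt (K * γ) / (γ - 1) * v t x ^ (-(γ - 1) / 2))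
       + (γ - 1) / γ * (Real.exp (S t x / (2 * c_v)) * px S t x / (2 * c_v)) *
        (2 * Real.sqrt (K * γ) / (γ - 1) *
          (px v t x * (-(γ - 1) / 2) * v t x ^ (-(γ - 1) / 2 - 1)))) x :=
    ((((hMx t ht x).mul (sXX x)).div_const (2 * c_v)).const_mul ((γ - 1) / γ)).mul
      (hP.const_mul (2 * Real.sqrt (K * γ) / (γ - 1)))
  -- t-direction derivative chains at (t,x)
  have hMt : HasDerivAt (fun τ => Real.exp (S τ x / (2 * c_v)))
      (Real.exp (S t x / (2 * c_v)) * (pt S t x / (2 * c_v))) t :=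
    ((sT x).div_const (2 * c_v)).exp
  have hPt : HasDerivAt (fun τ => v τ x ^ (-(γ - 1) / 2))
      (pt v t x * (-(γ - 1) / 2) * v t x ^ (-(γ - 1) / 2 - 1)) t :=
    (vT x).rpow_const (Or.inl hne)
  have hIt : HasDerivAt (fun τ => (v τ x)⁻¹) (-pt v t x / v t x ^ 2) t := (vT x).inv hne
  have h2t : HasDerivAt (fun τ => Real.sqrt (K * γ) * (v τ x ^ (-(γ - 1) / 2) * (v τ x)⁻¹) *
      Real.exp (S τ x / (2 * c_v)) * px v τ x)
      ((Real.sqrt (K * γ) * (pt v t x * (-(γ - 1) / 2) * v t x ^ (-(γ - 1) / 2 - 1) * (v t x)⁻¹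
          + v t x ^ (-(γ - 1) / 2) * (-pt v t x / v t x ^ 2)) * Real.exp (S t x / (2 * c_v))
        + Real.sqrt (K * γ) * (v t x ^ (-(γ - 1) / 2) * (v t x)⁻¹) *
            (Real.exp (S t x / (2 * c_v)) * (pt S t x / (2 * c_v)))) * px v t x
       + Real.sqrt (K * γ) * (v t x ^ (-(γ - 1) / 2) * (v t x)⁻¹) * Real.exp (S t x / (2 * c_v))
          * px (pt v) t x) t :=
    (((hPt.mul hIt).const_mul (Real.sqrt (K * γ))).mul hMt).mul (vXT x)
  have h3t : HasDerivAt (fun τ => (γ - 1) / γ *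
      (Real.exp (S τ x / (2 * c_v)) * px S τ x / (2 * c_v)) *
      (2 * Real.sqrt (K * γ) / (γ - 1) * v τ x ^ (-(γ - 1) / 2)))
      ((γ - 1) / γ * ((Real.exp (S t x / (2 * c_v)) * (pt S t x / (2 * c_v)) * px S t x
          + Real.exp (S t x / (2 * c_v)) * px (pt S) t x) / (2 * c_v)) *
        (2 * Real.sqrt (K * γ) / (γ - 1) * v t x ^ (-(γ - 1) / 2))
       + (γ - 1) / γ * (Real.exp (S t x / (2 * c_v)) * px S t x / (2 * c_v)) *
        (2 * Real.sqrt (K * γ) / (γ - 1) *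
          (pt v t x * (-(γ - 1) / 2) * v t x ^ (-(γ - 1) / 2 - 1)))) t :=
    (((hMt.mul (sXT x)).div_const (2 * c_v)).const_mul ((γ - 1) / γ)).mul
      (hPt.const_mul (2 * Real.sqrt (K * γ) / (γ - 1)))
  -- the four derivatives of ξ and ζ
  have hPXXI : px (xiE K c_v γ v u S) t x
      = px (px u) t x
        - ((Real.sqrt (K * γ) * (px v t x * (-(γ - 1) / 2) * v t x ^ (-(γ - 1) / 2 - 1) * (v t x)⁻¹
          + v t x ^ (-(γ - 1) / 2) * (-px v t x / v t x ^ 2)) * Real.exp (S t x / (2 * c_v))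
        + Real.sqrt (K * γ) * (v t x ^ (-(γ - 1) / 2) * (v t x)⁻¹) *
            (Real.exp (S t x / (2 * c_v)) * (px S t x / (2 * c_v)))) * px v t x
       + Real.sqrt (K * γ) * (v t x ^ (-(γ - 1) / 2) * (v t x)⁻¹) * Real.exp (S t x / (2 * c_v))
          * px (px v) t x)
        + ((γ - 1) / γ * ((Real.exp (S t x / (2 * c_v)) * (px S t x / (2 * c_v)) * px S t x
          + Real.exp (S t x / (2 * c_v)) * px (px S) t x) / (2 * c_v)) *
        (2 * Real.sqrt (K * γ) / (γ - 1) * v t x ^ (-(γ - 1) / 2))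
       + (γ - 1) / γ * (Real.exp (S t x / (2 * c_v)) * px S t x / (2 * c_v)) *
        (2 * Real.sqrt (K * γ) / (γ - 1) *
          (px v t x * (-(γ - 1) / 2) * v t x ^ (-(γ - 1) / 2 - 1)))) := by
    have hfun : (fun y => xiE K c_v γ v u S t y) = fun y =>
        px u t y - Real.sqrt (K * γ) * (v t y ^ (-(γ - 1) / 2) * (v t y)⁻¹) *
          Real.exp (S t y / (2 * c_v)) * px v t y
        + (γ - 1) / γ * (Real.exp (S t y / (2 * c_v)) * px S t y / (2 * c_v)) *
          (2 * Real.sqrt (K * γ) / (γ - 1) * v t y ^ (-(γ - 1) / 2)) := funext (hxi t ht)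
    rw [px_eq, hfun]
    exact (((uXX x).sub h2x).add h3x).deriv
  have hPXZE : px (zetaE K c_v γ v u S) t x
      = px (px u) t x
        + ((Real.sqrt (K * γ) * (px v t x * (-(γ - 1) / 2) * v t x ^ (-(γ - 1) / 2 - 1) * (v t x)⁻¹
          + v t x ^ (-(γ - 1) / 2) * (-px v t x / v t x ^ 2)) * Real.exp (S t x / (2 * c_v))
        + Real.sqrt (K * γ) * (v t x ^ (-(γ - 1) / 2) * (v t x)⁻¹) *
            (Real.exp (S t x / (2 * c_v)) * (px S t x / (2 * c_v)))) * px v t x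
       + Real.sqrt (K * γ) * (v t x ^ (-(γ - 1) / 2) * (v t x)⁻¹) * Real.exp (S t x / (2 * c_v))
          * px (px v) t x)
        - ((γ - 1) / γ * ((Real.exp (S t x / (2 * c_v)) * (px S t x / (2 * c_v)) * px S t x
          + Real.exp (S t x / (2 * c_v)) * px (px S) t x) / (2 * c_v)) *
        (2 * Real.sqrt (K * γ) / (γ - 1) * v t x ^ (-(γ - 1) / 2))
       + (γ - 1) / γ * (Real.exp (S t x / (2 * c_v)) * px S t x / (2 * c_v)) *
        (2 * Real.sqrt (K * γ) / (γ - 1) *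
          (px v t x * (-(γ - 1) / 2) * v t x ^ (-(γ - 1) / 2 - 1)))) := by
    have hfun : (fun y => zetaE K c_v γ v u S t y) = fun y =>
        px u t y + Real.sqrt (K * γ) * (v t y ^ (-(γ - 1) / 2) * (v t y)⁻¹) *
          Real.exp (S t y / (2 * c_v)) * px v t y
        - (γ - 1) / γ * (Real.exp (S t y / (2 * c_v)) * px S t y / (2 * c_v)) *
          (2 * Real.sqrt (K * γ) / (γ - 1) * v t y ^ (-(γ - 1) / 2)) := funext (hze t ht)
    rw [px_eq, hfun]
    exact (((uXX x).add h2x).sub h3x).deriv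
  have hPTXI : pt (xiE K c_v γ v u S) t x
      = px (pt u) t x
        - ((Real.sqrt (K * γ) * (pt v t x * (-(γ - 1) / 2) * v t x ^ (-(γ - 1) / 2 - 1) * (v t x)⁻¹
          + v t x ^ (-(γ - 1) / 2) * (-pt v t x / v t x ^ 2)) * Real.exp (S t x / (2 * c_v))
        + Real.sqrt (K * γ) * (v t x ^ (-(γ - 1) / 2) * (v t x)⁻¹) *
            (Real.exp (S t x / (2 * c_v)) * (pt S t x / (2 * c_v)))) * px v t x
       + Real.sqrt (K * γ) * (v t x ^ (-(γ - 1) / 2) * (v t x)⁻¹) * Real.exp (S t x / (2 * c_v))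
          * px (pt v) t x)
        + ((γ - 1) / γ * ((Real.exp (S t x / (2 * c_v)) * (pt S t x / (2 * c_v)) * px S t x
          + Real.exp (S t x / (2 * c_v)) * px (pt S) t x) / (2 * c_v)) *
        (2 * Real.sqrt (K * γ) / (γ - 1) * v t x ^ (-(γ - 1) / 2))
       + (γ - 1) / γ * (Real.exp (S t x / (2 * c_v)) * px S t x / (2 * c_v)) *
        (2 * Real.sqrt (K * γ) / (γ - 1) *
          (pt v t x * (-(γ - 1) / 2) * v t x ^ (-(γ - 1) / 2 - 1)))) := by
    have hfunt : (fun τ => xiE K c_v γ v u S τ x) =ᶠ[nhds t] fun τ =>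
        px u τ x - Real.sqrt (K * γ) * (v τ x ^ (-(γ - 1) / 2) * (v τ x)⁻¹) *
          Real.exp (S τ x / (2 * c_v)) * px v τ x
        + (γ - 1) / γ * (Real.exp (S τ x / (2 * c_v)) * px S τ x / (2 * c_v)) *
          (2 * Real.sqrt (K * γ) / (γ - 1) * v τ x ^ (-(γ - 1) / 2)) := by
      filter_upwards [isOpen_Ioo.mem_nhds ht] with τ hτ
      exact hxi τ hτ x
    rw [pt_eq, hfunt.deriv_eq]
    exact (((uXT x).sub h2t).add h3t).deriv
  have hPTZE : pt (zetaE K c_v γ v u S) t x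
      = px (pt u) t x
        + ((Real.sqrt (K * γ) * (pt v t x * (-(γ - 1) / 2) * v t x ^ (-(γ - 1) / 2 - 1) * (v t x)⁻¹
          + v t x ^ (-(γ - 1) / 2) * (-pt v t x / v t x ^ 2)) * Real.exp (S t x / (2 * c_v))
        + Real.sqrt (K * γ) * (v t x ^ (-(γ - 1) / 2) * (v t x)⁻¹) *
            (Real.exp (S t x / (2 * c_v)) * (pt S t x / (2 * c_v)))) * px v t x
       + Real.sqrt (K * γ) * (v t x ^ (-(γ - 1) / 2) * (v t x)⁻¹) * Real.exp (S t x / (2 * c_v))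
          * px (pt v) t x)
        - ((γ - 1) / γ * ((Real.exp (S t x / (2 * c_v)) * (pt S t x / (2 * c_v)) * px S t x
          + Real.exp (S t x / (2 * c_v)) * px (pt S) t x) / (2 * c_v)) *
        (2 * Real.sqrt (K * γ) / (γ - 1) * v t x ^ (-(γ - 1) / 2))
       + (γ - 1) / γ * (Real.exp (S t x / (2 * c_v)) * px S t x / (2 * c_v)) *
        (2 * Real.sqrt (K * γ) / (γ - 1) *
          (pt v t x * (-(γ - 1) / 2) * v t x ^ (-(γ - 1) / 2 - 1)))) := by
    have hfunt : (fun τ => zetaE K c_v γ v u S τ x) =ᶠ[nhds t] fun τ =>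
        px u τ x + Real.sqrt (K * γ) * (v τ x ^ (-(γ - 1) / 2) * (v τ x)⁻¹) *
          Real.exp (S τ x / (2 * c_v)) * px v τ x
        - (γ - 1) / γ * (Real.exp (S τ x / (2 * c_v)) * px S τ x / (2 * c_v)) *
          (2 * Real.sqrt (K * γ) / (γ - 1) * v τ x ^ (-(γ - 1) / 2)) := by
      filter_upwards [isOpen_Ioo.mem_nhds ht] with τ hτ
      exact hze τ hτ x
    rw [pt_eq, hfunt.deriv_eq]
    exact (((uXT x).add h2t).sub h3t).deriv
  -- PDE substitutions for the time derivatives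
  have hVT : pt v t x = px u t x := by
    have h := (hsys t x ⟨ht, mem_univ x⟩).2.1; linarith
  have hST : pt S t x = 0 := (hsys t x ⟨ht, mem_univ x⟩).2.2.2
  have hSTX : px (pt S) t x = 0 := by
    have hfun : (fun y => pt S t y) = fun _ => (0:ℝ) :=
      funext fun y => (hsys t y ⟨ht, mem_univ y⟩).2.2.2
    rw [px_eq, hfun, deriv_const]
  have hVTX : px (pt v) t x = px (px u) t x := by
    have hfun : (fun y => pt v t y) = fun y => px u t y := funext fun y => by
      have h := (hsys t y ⟨ht, mem_univ y⟩).2.1; linarith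
    rw [px_eq, hfun]; rfl
  -- pressure term
  have hpEx : ∀ y : ℝ, px (pE K c_v γ v S) t y
      = K * (Real.exp (S t y / c_v) * (px S t y / c_v)) * v t y ^ (-γ)
        + K * Real.exp (S t y / c_v) * (px v t y * (-γ) * v t y ^ (-γ - 1)) := fun y =>
    (((((sX y).div_const c_v).exp).const_mul K).mul
      ((vX y).rpow_const (Or.inl (hvpos t ht y).ne'))).deriv
  have hE : HasDerivAt (fun y => Real.exp (S t y / c_v))
      (Real.exp (S t x / c_v) * (px S t x / c_v)) x := ((sX x).div_const c_v).exp
  have hUTXchain : HasDerivAt (fun y =>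
      K * (Real.exp (S t y / c_v) * (px S t y / c_v)) * v t y ^ (-γ)
      + K * Real.exp (S t y / c_v) * (px v t y * (-γ) * v t y ^ (-γ - 1)))
      (K * (Real.exp (S t x / c_v) * (px S t x / c_v) * (px S t x / c_v)
          + Real.exp (S t x / c_v) * (px (px S) t x / c_v)) * v t x ^ (-γ)
        + K * (Real.exp (S t x / c_v) * (px S t x / c_v)) *
            (px v t x * (-γ) * v t x ^ (-γ - 1))
       + (K * (Real.exp (S t x / c_v) * (px S t x / c_v)) *
            (px v t x * (-γ) * v t x ^ (-γ - 1))
          + K * Real.exp (S t x / c_v) * (px (px v) t x * (-γ) * v t x ^ (-γ - 1)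
              + px v t x * (-γ) * (px v t x * (-γ - 1) * v t x ^ (-γ - 1 - 1))))) x :=
    (((hE.mul ((sXX x).div_const c_v)).const_mul K).mul
        ((vX x).rpow_const (Or.inl hne))).add
      ((hE.const_mul K).mul (((vXX x).mul_const (-γ)).mul
        ((vX x).rpow_const (Or.inl hne))))
  have hUTX : px (pt u) t x
      = -(K * (Real.exp (S t x / c_v) * (px S t x / c_v) * (px S t x / c_v)
          + Real.exp (S t x / c_v) * (px (px S) t x / c_v)) * v t x ^ (-γ)
        + K * (Real.exp (S t x / c_v) * (px S t x / c_v)) *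
            (px v t x * (-γ) * v t x ^ (-γ - 1))
       + (K * (Real.exp (S t x / c_v) * (px S t x / c_v)) *
            (px v t x * (-γ) * v t x ^ (-γ - 1))
          + K * Real.exp (S t x / c_v) * (px (px v) t x * (-γ) * v t x ^ (-γ - 1)
              + px v t x * (-γ) * (px v t x * (-γ - 1) * v t x ^ (-γ - 1 - 1))))) := by
    have hfun : (fun y => pt u t y) = fun y =>
        -(K * (Real.exp (S t y / c_v) * (px S t y / c_v)) * v t y ^ (-γ)
          + K * Real.exp (S t y / c_v) * (px v t y * (-γ) * v t y ^ (-γ - 1))) :=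
      funext fun y => by
        have h1 := (hsys t y ⟨ht, mem_univ y⟩).2.2.1
        have h2 := hpEx y
        linarith
    rw [px_eq, hfun]
    exact hUTXchain.neg.deriv
  -- point values of the coefficients
  have hcE : cE K c_v γ v S t x
      = Real.sqrt (K * γ) * (v t x ^ (-(γ - 1) / 2) * (v t x)⁻¹) *
          Real.exp (S t x / (2 * c_v)) := by
    simp only [cE, hatSF]; rw [rpow_idB hV γ]
  have hk1 : k1E K c_v γ v t x = (γ + 1) / (4 * v t x) := by
    simp only [k1E, aE]; exact k1_val hK hγ hV
  have hk2 : k2E K c_v γ v S t x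
      = (γ - 1) / (γ * (γ + 1)) * (2 * Real.sqrt (K * γ) / (γ - 1) * v t x ^ (-(γ - 1) / 2)) *
          (Real.exp (S t x / (2 * c_v)) * (px S t x / (2 * c_v))) := by
    simp only [k2E, aE]; rw [hMderiv t ht x]
  have hexp2 : Real.exp (S t x / c_v)
      = Real.exp (S t x / (2 * c_v)) * Real.exp (S t x / (2 * c_v)) := by
    rw [← Real.exp_add]; congr 1; field_simp; ring
  have hsqK : K = Real.sqrt (K * γ) ^ 2 / γ := by
    rw [Real.sq_sqrt hKγ.le]; field_simp
  refine ⟨?_, ?_⟩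
  · rw [hPTXI, hPXXI, hcE, hk1, hk2, hxi t ht x, hze t ht x, hUTX, hVTX, hSTX, hVT, hST]
    simp only [rpow_idA hV γ, rpow_idD hV γ, rpow_idE hV γ, rpow_idF hV γ]
    rw [hexp2]
    rw [hsqK]
    field_simp
    simp only [Real.sqrt_sq (Real.sqrt_nonneg _)]
    ring
  · rw [hPTZE, hPXZE, hcE, hk1, hk2, hxi t ht x, hze t ht x, hUTX, hVTX, hSTX, hVT, hST]
    simp only [rpow_idA hV γ, rpow_idD hV γ, rpow_idE hV γ, rpow_idF hV γ]
    rw [hexp2]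
    rw [hsqK]
    field_simp
    simp only [Real.sqrt_sq (Real.sqrt_nonneg _)]
    ring
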